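/- Let 0 < L ≤ U be reals, and let Q : ℝ → ℝ satisfy L·x ≤ Q(x) ≤ U·x for all x ∈ [0,1]. Let k, r, C be naturals with k ≤ r, set m = r − k, and let w ∈ [0,1]. Define θ = max 0 (1 − U·w/L) and, for θ' ∈ [0,1], E(θ') = ∑_{j=0}^{C} min(j, m) · (C choose j) · θ'^j · (1 − θ')^{C − j}. Then Q(w) · (k + E(1 − w)) ≥ L · w · (k + E(θ)). (This is the conditional form, given that the (k+1)-th largest non-colluding uniform order statistic equals w, of the minorant of the expected Hybrid-VCG revenue in Lemma 4.7.) -/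
import Mathlib


/-- `E[min(Binomial(C, θ'), m)] = ∑_{j=0}^{C} min(j, m) (C choose j) θ'^j (1-θ')^(C-j)`,
the expected number of items sold to colluders at a posted price with qualification
probability `θ'` and capacity `m`. -/
noncomputable def binExp (C m : ℕ) (θ' : ℝ) : ℝ :=
  ∑ j ∈ Finset.range (C + 1),
    ((min j m : ℕ) : ℝ) * (C.choose j : ℝ) * θ' ^ j * (1 - θ') ^ (C - j)

noncomputable def binS (f : ℕ → ℝ) (C : ℕ) (p : ℝ) : ℝ :=
  ∑ j ∈ Finset.range (C + 1), f j * (C.choose j : ℝ) * p ^ j * (1 - p) ^ (C - j)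

lemma binS_rec (f : ℕ → ℝ) (C : ℕ) (p : ℝ) :
    binS f (C + 1) p = (1 - p) * binS f C p + p * binS (fun j => f (j + 1)) C p := by
  unfold binS
  rw [Finset.sum_range_succ' (fun j => f j * ((C+1).choose j : ℝ) * p ^ j * (1 - p) ^ (C + 1 - j))]
  have key : ∀ j ∈ Finset.range (C + 1),
      f (j+1) * (((C+1).choose (j+1) : ℕ) : ℝ) * p ^ (j+1) * (1 - p) ^ (C + 1 - (j+1))
      = f (j+1) * ((C.choose j : ℕ) : ℝ) * p ^ (j+1) * (1 - p) ^ (C - j)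
        + f (j+1) * ((C.choose (j+1) : ℕ) : ℝ) * p ^ (j+1) * (1 - p) ^ (C - j) := by
    intro j hj
    rw [Nat.choose_succ_succ, Nat.succ_sub_succ]
    push_cast
    ring
  rw [Finset.sum_congr rfl key, Finset.sum_add_distrib]
  -- now handle the two sums
  have h2 : ∑ j ∈ Finset.range (C + 1),
      f (j+1) * ((C.choose (j+1) : ℕ) : ℝ) * p ^ (j+1) * (1 - p) ^ (C - j)
      = ∑ j ∈ Finset.range (C + 1),
        (1 - p) * (f (j+1) * ((C.choose (j+1) : ℕ) : ℝ) * p ^ (j+1) * (1 - p) ^ (C - (j+1))) := by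
    rw [Finset.sum_range_succ, Finset.sum_range_succ]
    simp [Nat.choose_succ_self]
    apply Finset.sum_congr rfl
    intro j hj
    have hjC : j + 1 ≤ C := Nat.succ_le_of_lt (Finset.mem_range.mp hj)
    have : C - j = (C - (j+1)) + 1 := by omega
    rw [this]
    ring
  rw [h2]
  have h3 : f 0 * (((C+1).choose 0 : ℕ) : ℝ) * p ^ 0 * (1 - p) ^ (C + 1 - 0)
      = (1 - p) * (f 0 * ((C.choose 0 : ℕ) : ℝ) * p ^ 0 * (1 - p) ^ (C - 0)) := by
    simp; ring
  rw [h3]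
  rw [← Finset.mul_sum]
  rw [Finset.sum_range_succ (fun i => f (i+1) * ((C.choose (i+1) : ℕ) : ℝ) * p ^ (i+1) * (1 - p) ^ (C - (i+1)))]
  rw [Finset.sum_range_succ' (fun j => (f j * ((C.choose j : ℕ) : ℝ) * p ^ j * (1 - p) ^ (C - j)))]
  simp only [Nat.choose_succ_self, Nat.cast_zero]
  have h4 : ∑ j ∈ Finset.range (C+1), f (j+1) * ((C.choose j : ℕ) : ℝ) * p ^ (j+1) * (1 - p) ^ (C - j)
      = p * ∑ j ∈ Finset.range (C+1), f (j+1) * ((C.choose j : ℕ) : ℝ) * p ^ j * (1 - p) ^ (C - j) := by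
    rw [Finset.mul_sum]; apply Finset.sum_congr rfl; intro j _; ring
  rw [h4]
  ring

lemma binS_shift_le (f : ℕ → ℝ) (hf : Monotone f) (C : ℕ) (p : ℝ)
    (hp0 : 0 ≤ p) (hp1 : p ≤ 1) :
    binS f C p ≤ binS (fun j => f (j + 1)) C p := by
  apply Finset.sum_le_sum
  intro j _
  have hw : (0:ℝ) ≤ (C.choose j : ℝ) * (p ^ j * (1 - p) ^ (C - j)) :=
    mul_nonneg (Nat.cast_nonneg _)
      (mul_nonneg (pow_nonneg hp0 _) (pow_nonneg (by linarith) _))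
  have hm := hf (Nat.le_succ j)
  show f j * (C.choose j : ℝ) * p ^ j * (1 - p) ^ (C - j) ≤
      f (j + 1) * (C.choose j : ℝ) * p ^ j * (1 - p) ^ (C - j)
  calc f j * (C.choose j : ℝ) * p ^ j * (1 - p) ^ (C - j)
      = f j * ((C.choose j : ℝ) * (p ^ j * (1 - p) ^ (C - j))) := by ring
    _ ≤ f (j + 1) * ((C.choose j : ℝ) * (p ^ j * (1 - p) ^ (C - j))) :=
        mul_le_mul_of_nonneg_right hm hw
    _ = f (j + 1) * (C.choose j : ℝ) * p ^ j * (1 - p) ^ (C - j) := by ring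

lemma binS_mono (C : ℕ) : ∀ (f : ℕ → ℝ), Monotone f → ∀ p q : ℝ,
    0 ≤ p → p ≤ q → q ≤ 1 → binS f C p ≤ binS f C q := by
  induction C with
  | zero => intro f _ p q _ _ _; simp [binS]
  | succ C ih =>
    intro f hf p q hp hpq hq
    have hf' : Monotone (fun j => f (j + 1)) := fun a b hab => hf (by omega)
    have h1 := ih f hf p q hp hpq hq
    have h2 := ih (fun j => f (j + 1)) hf' p q hp hpq hq
    have h3 := binS_shift_le f hf C p hp (le_trans hpq hq)
    have h4 := binS_shift_le f hf C q (le_trans hp hpq) hq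
    rw [binS_rec, binS_rec]
    nlinarith

lemma binS_nonneg (f : ℕ → ℝ) (hf : ∀ j, 0 ≤ f j) (C : ℕ) (p : ℝ)
    (hp0 : 0 ≤ p) (hp1 : p ≤ 1) : 0 ≤ binS f C p := by
  apply Finset.sum_nonneg
  intro j _
  have h1p : (0:ℝ) ≤ 1 - p := by linarith
  exact mul_nonneg (mul_nonneg (mul_nonneg (hf j) (Nat.cast_nonneg _))
    (pow_nonneg hp0 _)) (pow_nonneg h1p _)

lemma binExp_eq (C m : ℕ) (p : ℝ) :
    binExp C m p = binS (fun j => ((min j m : ℕ) : ℝ)) C p := rfl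

/-- Conditional form (given that the `(k+1)`-th largest non-colluding uniform order
statistic equals `w`) of the minorant of the expected Hybrid-VCG revenue: with
`m = r - k` and `θ = max 0 (1 - U·w/L)`,
`Q(w) · (k + E(1-w)) ≥ L·w · (k + E(θ))`. -/
theorem stmt_16 (L U : ℝ) (hL : 0 < L) (hLU : L ≤ U)
    (Q : ℝ → ℝ)
    (hQ : ∀ x ∈ Set.Icc (0 : ℝ) 1, L * x ≤ Q x ∧ Q x ≤ U * x)
    (k r C : ℕ) (hkr : k ≤ r) (w : ℝ) (hw : w ∈ Set.Icc (0 : ℝ) 1) :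
    Q w * ((k : ℝ) + binExp C (r - k) (1 - w)) ≥
      L * w * ((k : ℝ) + binExp C (r - k) (max 0 (1 - U * w / L))) := by
  obtain ⟨hw0, hw1⟩ := hw
  set m := r - k
  set θ := max 0 (1 - U * w / L) with hθ
  have hθ0 : 0 ≤ θ := le_max_left _ _
  have hwUL : w ≤ U * w / L := by
    rw [le_div_iff₀ hL]
    nlinarith
  have hθw : θ ≤ 1 - w := by
    apply max_le (by linarith) (by linarith)
  have hfmono : Monotone (fun j => ((min j m : ℕ) : ℝ)) := fun a b hab => by
    exact_mod_cast Nat.cast_le.mpr (min_le_min hab le_rfl)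
  have hfnn : ∀ j, (0:ℝ) ≤ ((min j m : ℕ) : ℝ) := fun j => Nat.cast_nonneg _
  have hmono : binExp C m θ ≤ binExp C m (1 - w) := by
    rw [binExp_eq, binExp_eq]
    exact binS_mono C _ hfmono θ (1 - w) hθ0 hθw (by linarith)
  have hnn : 0 ≤ binExp C m θ := by
    rw [binExp_eq]
    exact binS_nonneg _ hfnn C θ hθ0 (by linarith)
  have hQw := hQ w ⟨hw0, hw1⟩
  have hLw : 0 ≤ L * w := mul_nonneg hL.le hw0
  have h1 : (k : ℝ) + binExp C m θ ≤ (k : ℝ) + binExp C m (1 - w) := by linarith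
  have h2 : (0:ℝ) ≤ (k : ℝ) + binExp C m θ := by positivity
  exact mul_le_mul hQw.1 h1 h2 (le_trans hLw hQw.1)
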